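/- Let (X, μ) be a finite measure space, δ a positive integer, and let u, v, g : X → ℝ be measurable functions with u, v ∈ L²(μ) ∩ L^{2(δ+1)}(μ) and g ∈ L^{2(δ+1)}(μ). Then | ∫ (u^{δ+1} − v^{δ+1})·g dμ | ≤ (δ+1)·2^{δ−1}·‖u − v‖_{L²(μ)} · ( ‖u‖_{L^{2(δ+1)}(μ)}^δ + ‖v‖_{L^{2(δ+1)}(μ)}^δ ) · ‖g‖_{L^{2(δ+1)}(μ)}. -/

import Mathlib

open MeasureTheory

/-- The L^p(μ) norm ‖f‖_{L^p(μ)} = (∫ |f|^p dμ)^{1/p}. -/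
noncomputable def lpNormR {X : Type*} [MeasurableSpace X] (μ : Measure X) (p : ℕ)
    (f : X → ℝ) : ℝ :=
  (∫ x, |f x| ^ p ∂μ) ^ ((1 : ℝ) / p)


open scoped ENNReal

-- pointwise lemmas
lemma term_bound (a b : ℝ) {n i : ℕ} (hi : i ≤ n) :
    |a| ^ i * |b| ^ (n - i) ≤ |a| ^ n + |b| ^ n := by
  rcases le_total |a| |b| with h | h
  · calc |a| ^ i * |b| ^ (n - i) ≤ |b| ^ i * |b| ^ (n - i) := by
          gcongr
      _ = |b| ^ n := by rw [← pow_add]; congr 1; omega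
      _ ≤ |a| ^ n + |b| ^ n := le_add_of_nonneg_left (by positivity)
  · calc |a| ^ i * |b| ^ (n - i) ≤ |a| ^ i * |a| ^ (n - i) := by
          gcongr
      _ = |a| ^ n := by rw [← pow_add]; congr 1; omega
      _ ≤ |a| ^ n + |b| ^ n := le_add_of_nonneg_right (by positivity)

lemma pow_sub_bound (a b : ℝ) (n : ℕ) :
    |a ^ (n + 1) - b ^ (n + 1)| ≤ ((n : ℝ) + 1) * ((|a| ^ n + |b| ^ n) * |a - b|) := by
  have h := geom_sum₂_mul a b (n + 1)
  calc |a ^ (n + 1) - b ^ (n + 1)|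
      = |(∑ i ∈ Finset.range (n + 1), a ^ i * b ^ (n + 1 - 1 - i))| * |a - b| := by
        rw [← abs_mul, h]
    _ ≤ (((n : ℝ) + 1) * (|a| ^ n + |b| ^ n)) * |a - b| := by
        apply mul_le_mul_of_nonneg_right _ (abs_nonneg _)
        calc |(∑ i ∈ Finset.range (n + 1), a ^ i * b ^ (n + 1 - 1 - i))|
            ≤ ∑ i ∈ Finset.range (n + 1), |a ^ i * b ^ (n + 1 - 1 - i)| :=
              Finset.abs_sum_le_sum_abs _ _
          _ ≤ ∑ i ∈ Finset.range (n + 1), (|a| ^ n + |b| ^ n) := by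
              apply Finset.sum_le_sum
              intro i hi
              rw [abs_mul, abs_pow, abs_pow]
              exact term_bound a b (by simpa using Nat.lt_succ_iff.mp (Finset.mem_range.mp hi))
          _ = ((n : ℝ) + 1) * (|a| ^ n + |b| ^ n) := by
              rw [Finset.sum_const, Finset.card_range]; simp [add_mul]; ring
    _ = ((n : ℝ) + 1) * ((|a| ^ n + |b| ^ n) * |a - b|) := by ring

lemma prod_pow_bound (a b : ℝ) (n : ℕ) :
    |a| ^ (2 * n) * |b| ^ 2 ≤ |a| ^ (2 * (n + 1)) + |b| ^ (2 * (n + 1)) := by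
  have := term_bound a b (n := 2 * (n+1)) (i := 2 * n) (by omega)
  have h2 : 2 * (n + 1) - 2 * n = 2 := by omega
  rwa [h2] at this

-- Memℒp from integrability of nat power
lemma memLp_nat {X : Type*} [MeasurableSpace X] {μ : Measure X} {f : X → ℝ}
    (hf : AEStronglyMeasurable f μ) (n : ℕ) (hn : n ≠ 0)
    (h : Integrable (fun x => |f x| ^ n) μ) : MemLp f (n : ℝ≥0∞) μ := by
  have hn' : (n : ℝ≥0∞) ≠ 0 := by exact_mod_cast hn
  have := (memLp_norm_rpow_iff (p := (n : ℝ≥0∞)) (q := (n : ℝ≥0∞)) hf hn'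
    (ENNReal.natCast_ne_top n)).1
  apply this
  rw [ENNReal.div_self hn' (ENNReal.natCast_ne_top n), memLp_one_iff_integrable]
  have : (fun x : X => ‖f x‖ ^ (n : ℝ≥0∞).toReal) = fun x => |f x| ^ n := by
    funext x
    simp [Real.rpow_natCast]
  rw [this]
  exact h

lemma stepB {X : Type*} [MeasurableSpace X] (μ : Measure X) [IsFiniteMeasure μ]
    (δ : ℕ) (hδ : 0 < δ) (w g : X → ℝ) (hw : Measurable w) (hg : Measurable g)
    (hwp : Integrable (fun x => |w x| ^ (2 * (δ + 1))) μ)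
    (hgp : Integrable (fun x => |g x| ^ (2 * (δ + 1))) μ) :
    ∫ x, |w x| ^ (2 * δ) * |g x| ^ 2 ∂μ ≤
      (∫ x, |w x| ^ (2 * (δ + 1)) ∂μ) ^ ((δ : ℝ) / (δ + 1)) *
      (∫ x, |g x| ^ (2 * (δ + 1)) ∂μ) ^ ((1 : ℝ) / (δ + 1)) := by
  have hδR : (0 : ℝ) < δ := by exact_mod_cast hδ
  set p : ℝ := ((δ : ℝ) + 1) / δ with hp
  set q : ℝ := (δ : ℝ) + 1 with hq
  have hpq : p.HolderConjugate q := by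
    rw [Real.holderConjugate_iff]; constructor
    · rw [hp, lt_div_iff₀ hδR]; linarith
    · rw [hp, hq]; field_simp
  -- Memℒp conditions
  have hMw : MemLp w ((2 * (δ + 1) : ℕ) : ℝ≥0∞) μ :=
    memLp_nat hw.aestronglyMeasurable _ (by omega) hwp
  have hMg : MemLp g ((2 * (δ + 1) : ℕ) : ℝ≥0∞) μ :=
    memLp_nat hg.aestronglyMeasurable _ (by omega) hgp
  have hw2δ : MemLp (fun x => |w x| ^ (2 * δ)) (ENNReal.ofReal p) μ := by
    have h2δ : ((2 * δ : ℕ) : ℝ≥0∞) ≠ 0 := by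
      simp; omega
    have := (memLp_norm_rpow_iff (p := ((2 * (δ + 1) : ℕ) : ℝ≥0∞))
      (q := ((2 * δ : ℕ) : ℝ≥0∞)) hw.aestronglyMeasurable h2δ (ENNReal.natCast_ne_top _)).2 hMw
    have hfun : (fun x : X => ‖w x‖ ^ (((2 * δ : ℕ) : ℝ≥0∞)).toReal)
        = fun x => |w x| ^ (2 * δ) := by
      funext x; rw [ENNReal.toReal_natCast, Real.rpow_natCast, Real.norm_eq_abs]
    have hexp : ((2 * (δ + 1) : ℕ) : ℝ≥0∞) / ((2 * δ : ℕ) : ℝ≥0∞) = ENNReal.ofReal p := by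
      rw [← ENNReal.ofReal_natCast (2 * (δ + 1)), ← ENNReal.ofReal_natCast (2 * δ),
        ← ENNReal.ofReal_div_of_pos (by positivity)]
      congr 1
      rw [hp]
      push_cast
      field_simp
      ring
    rw [hfun, hexp] at this
    exact this
  have hg2 : MemLp (fun x => |g x| ^ 2) (ENNReal.ofReal q) μ := by
    have h2 : ((2 : ℕ) : ℝ≥0∞) ≠ 0 := by simp
    have := (memLp_norm_rpow_iff (p := ((2 * (δ + 1) : ℕ) : ℝ≥0∞))
      (q := ((2 : ℕ) : ℝ≥0∞)) hg.aestronglyMeasurable h2 (ENNReal.natCast_ne_top _)).2 hMg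
    have hfun : (fun x : X => ‖g x‖ ^ (((2 : ℕ) : ℝ≥0∞)).toReal)
        = fun x => |g x| ^ 2 := by
      funext x; rw [ENNReal.toReal_natCast, Real.rpow_natCast, Real.norm_eq_abs]
    have hexp : ((2 * (δ + 1) : ℕ) : ℝ≥0∞) / ((2 : ℕ) : ℝ≥0∞) = ENNReal.ofReal q := by
      rw [← ENNReal.ofReal_natCast (2 * (δ + 1)), ← ENNReal.ofReal_natCast 2,
        ← ENNReal.ofReal_div_of_pos (by positivity)]
      congr 1
      rw [hq]
      push_cast
      field_simp
    rw [hfun, hexp] at this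
    exact this
  have H := integral_mul_le_Lp_mul_Lq_of_nonneg (μ := μ) hpq
    (Filter.Eventually.of_forall fun x => by positivity)
    (Filter.Eventually.of_forall fun x => by positivity) hw2δ hg2
  -- rewrite integrands in H
  have e1 : (fun x => (|w x| ^ (2 * δ)) ^ p) = fun x => |w x| ^ (2 * (δ + 1)) := by
    funext x
    rw [← Real.rpow_natCast |w x| (2 * δ), ← Real.rpow_mul (abs_nonneg _),
      ← Real.rpow_natCast |w x| (2 * (δ + 1))]
    congr 1
    rw [hp]; push_cast; field_simp; ring
  have e2 : (fun x => (|g x| ^ 2) ^ q) = fun x => |g x| ^ (2 * (δ + 1)) := by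
    funext x
    rw [← Real.rpow_natCast |g x| 2, ← Real.rpow_mul (abs_nonneg _),
      ← Real.rpow_natCast |g x| (2 * (δ + 1))]
    congr 1
    rw [hq]; push_cast; ring
  have e3 : 1 / p = (δ : ℝ) / (δ + 1) := by rw [hp, one_div_div]
  have e4 : 1 / q = (1 : ℝ) / (δ + 1) := by rw [hq]
  simpa only [e1, e2, e3, e4] using H

lemma keyCS {X : Type*} [MeasurableSpace X] (μ : Measure X) [IsFiniteMeasure μ]
    (δ : ℕ) (hδ : 0 < δ) (f w g : X → ℝ)
    (hf : Measurable f) (hw : Measurable w) (hg : Measurable g)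
    (hf2 : Integrable (fun x => |f x| ^ 2) μ)
    (hwp : Integrable (fun x => |w x| ^ (2 * (δ + 1))) μ)
    (hgp : Integrable (fun x => |g x| ^ (2 * (δ + 1))) μ) :
    ∫ x, |f x| * (|w x| ^ δ * |g x|) ∂μ ≤
      (∫ x, |f x| ^ 2 ∂μ) ^ ((1 : ℝ) / 2) *
      (((∫ x, |w x| ^ (2 * (δ + 1)) ∂μ) ^ ((1 : ℝ) / (2 * (δ + 1)))) ^ δ *
        (∫ x, |g x| ^ (2 * (δ + 1)) ∂μ) ^ ((1 : ℝ) / (2 * (δ + 1)))) := by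
  have hpq : (2 : ℝ).HolderConjugate 2 := by rw [Real.holderConjugate_iff]; constructor <;> norm_num
  have hMf : MemLp (fun x => |f x|) (ENNReal.ofReal 2) μ := by
    have : ENNReal.ofReal 2 = ((2 : ℕ) : ℝ≥0∞) := by
      rw [← ENNReal.ofReal_natCast 2]; norm_num
    rw [this]
    exact memLp_nat hf.abs.aestronglyMeasurable 2 (by norm_num)
      (by simpa [abs_abs] using hf2)
  have hMh : MemLp (fun x => |w x| ^ δ * |g x|) (ENNReal.ofReal 2) μ := by
    have : ENNReal.ofReal 2 = ((2 : ℕ) : ℝ≥0∞) := by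
      rw [← ENNReal.ofReal_natCast 2]; norm_num
    rw [this]
    apply memLp_nat ((hw.abs.pow_const δ).mul hg.abs).aestronglyMeasurable 2 (by norm_num)
    have hb : ∀ x, ‖(|w x| ^ δ * |g x|) ^ 2‖ ≤ |w x| ^ (2 * (δ + 1)) + |g x| ^ (2 * (δ + 1)) := by
      intro x
      have := prod_pow_bound (w x) (g x) δ
      calc ‖(|w x| ^ δ * |g x|) ^ 2‖ = |w x| ^ (2 * δ) * |g x| ^ 2 := by
            rw [Real.norm_eq_abs, abs_of_nonneg (by positivity), mul_pow, ← pow_mul]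
            ring_nf
        _ ≤ _ := this
    have := Integrable.mono' (hwp.add hgp)
      ((((hw.abs.pow_const δ).mul hg.abs).pow_const 2).abs.aestronglyMeasurable)
      (Filter.Eventually.of_forall fun x => by simpa [abs_abs] using hb x)
    simpa [abs_abs] using this.abs
  have H := integral_mul_le_Lp_mul_Lq_of_nonneg (μ := μ) hpq
    (Filter.Eventually.of_forall fun x => abs_nonneg (f x))
    (Filter.Eventually.of_forall fun x => by positivity) hMf hMh
  have e1 : (fun x => |f x| ^ (2 : ℝ)) = fun x => |f x| ^ 2 := by
    funext x
    rw [show (2 : ℝ) = ((2 : ℕ) : ℝ) by norm_num, Real.rpow_natCast]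
  have e2 : (fun x => (|w x| ^ δ * |g x|) ^ (2 : ℝ)) = fun x => |w x| ^ (2 * δ) * |g x| ^ 2 := by
    funext x
    rw [show (2 : ℝ) = ((2 : ℕ) : ℝ) by norm_num, Real.rpow_natCast, mul_pow, ← pow_mul]
    ring_nf
  rw [e1, e2] at H
  refine H.trans ?_
  apply mul_le_mul_of_nonneg_left _ (by positivity)
  -- second factor: use stepB
  have hW : (0 : ℝ) ≤ ∫ x, |w x| ^ (2 * (δ + 1)) ∂μ := integral_nonneg fun x => by positivity
  have hG : (0 : ℝ) ≤ ∫ x, |g x| ^ (2 * (δ + 1)) ∂μ := integral_nonneg fun x => by positivity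
  have hB := stepB μ δ hδ w g hw hg hwp hgp
  calc (∫ x, |w x| ^ (2 * δ) * |g x| ^ 2 ∂μ) ^ ((1 : ℝ) / 2)
      ≤ ((∫ x, |w x| ^ (2 * (δ + 1)) ∂μ) ^ ((δ : ℝ) / (δ + 1)) *
        (∫ x, |g x| ^ (2 * (δ + 1)) ∂μ) ^ ((1 : ℝ) / (δ + 1))) ^ ((1 : ℝ) / 2) :=
        Real.rpow_le_rpow (integral_nonneg fun x => by positivity) hB (by norm_num)
    _ = ((∫ x, |w x| ^ (2 * (δ + 1)) ∂μ) ^ ((1 : ℝ) / (2 * (δ + 1)))) ^ δ *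
        (∫ x, |g x| ^ (2 * (δ + 1)) ∂μ) ^ ((1 : ℝ) / (2 * (δ + 1))) := by
        rw [Real.mul_rpow (by positivity) (by positivity),
          ← Real.rpow_natCast ((∫ x, |w x| ^ (2 * (δ + 1)) ∂μ) ^ ((1 : ℝ) / (2 * (δ + 1)))) δ,
          ← Real.rpow_mul hW, ← Real.rpow_mul hW, ← Real.rpow_mul hG]
        have hδ1 : (δ : ℝ) + 1 ≠ 0 := by positivity
        congr 1
        · congr 1
          field_simp
          all_goals first | ring1 | exact Or.inl (by ring1) | exact Or.inl trivial
        · congr 1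
          field_simp
          all_goals first | ring1 | exact Or.inl (by ring1) | exact Or.inl trivial

/-- Three-factor Hölder bound (paper's estimate (215)): on a finite measure space, for
u, v ∈ L²(μ) ∩ L^{2(δ+1)}(μ) and g ∈ L^{2(δ+1)}(μ),
| ∫ (u^{δ+1} − v^{δ+1})·g dμ | ≤
  (δ+1)·2^{δ−1}·‖u − v‖_{L²} · ( ‖u‖_{L^{2(δ+1)}}^δ + ‖v‖_{L^{2(δ+1)}}^δ ) · ‖g‖_{L^{2(δ+1)}}. -/
theorem stmt_12 {X : Type*} [MeasurableSpace X] (μ : Measure X) [IsFiniteMeasure μ]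
    (δ : ℕ) (hδ : 0 < δ) (u v g : X → ℝ)
    (hu : Measurable u) (hv : Measurable v) (hg : Measurable g)
    (hu2 : Integrable (fun x => |u x| ^ 2) μ)
    (hv2 : Integrable (fun x => |v x| ^ 2) μ)
    (hup : Integrable (fun x => |u x| ^ (2 * (δ + 1))) μ)
    (hvp : Integrable (fun x => |v x| ^ (2 * (δ + 1))) μ)
    (hgp : Integrable (fun x => |g x| ^ (2 * (δ + 1))) μ) :
    |∫ x, (u x ^ (δ + 1) - v x ^ (δ + 1)) * g x ∂μ| ≤
      ((δ : ℝ) + 1) * 2 ^ (δ - 1) * lpNormR μ 2 (fun x => u x - v x) *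
        (lpNormR μ (2 * (δ + 1)) u ^ δ + lpNormR μ (2 * (δ + 1)) v ^ δ) *
        lpNormR μ (2 * (δ + 1)) g := by
  -- integrability of |u - v|^2
  have hfv2 : Integrable (fun x => |u x - v x| ^ 2) μ := by
    apply Integrable.mono' (((hu2.const_mul 2)).add ((hv2.const_mul 2)))
      (((hu.sub hv).abs.pow_const 2).aestronglyMeasurable)
    refine Filter.Eventually.of_forall fun x => ?_
    have h1 : |u x - v x| ≤ |u x| + |v x| := abs_sub _ _
    have h2 : (0:ℝ) ≤ |u x - v x| := abs_nonneg _
    rw [Real.norm_eq_abs, abs_of_nonneg (by positivity)]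
    simp only [Pi.add_apply, Pi.sub_apply]
    have h3 : |u x - v x| ^ 2 ≤ (|u x| + |v x|) ^ 2 := pow_le_pow_left₀ h2 h1 2
    nlinarith [sq_nonneg (|u x| - |v x|)]
  -- integrability of the products
  have hprod : ∀ w : X → ℝ, Measurable w →
      Integrable (fun x => |w x| ^ (2 * (δ + 1))) μ →
      Integrable (fun x => |u x - v x| * (|w x| ^ δ * |g x|)) μ := by
    intro w hw hwp
    apply Integrable.mono' (hfv2.add (hwp.add hgp))
      (((hu.sub hv).abs.mul ((hw.abs.pow_const δ).mul hg.abs)).aestronglyMeasurable)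
    refine Filter.Eventually.of_forall fun x => ?_
    have hab : |u x - v x| * (|w x| ^ δ * |g x|) ≤
        |u x - v x| ^ 2 + (|w x| ^ δ * |g x|) ^ 2 := by
      nlinarith [sq_nonneg (|u x - v x| - |w x| ^ δ * |g x|), abs_nonneg (u x - v x),
        abs_nonneg (w x), abs_nonneg (g x), pow_nonneg (abs_nonneg (w x)) δ]
    have hsq : (|w x| ^ δ * |g x|) ^ 2 ≤ |w x| ^ (2 * (δ + 1)) + |g x| ^ (2 * (δ + 1)) := by
      have := prod_pow_bound (w x) (g x) δ
      calc (|w x| ^ δ * |g x|) ^ 2 = |w x| ^ (2 * δ) * |g x| ^ 2 := by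
            rw [mul_pow, ← pow_mul]; ring_nf
        _ ≤ _ := this
    simp only [Pi.mul_apply, Pi.sub_apply]
    rw [Real.norm_eq_abs, abs_of_nonneg (by positivity)]
    simp only [Pi.add_apply]
    linarith
  have hprod_u := hprod u hu hup
  have hprod_v := hprod v hv hvp
  -- step 1 and 2: pointwise bound and monotonicity
  have step1 : |∫ x, (u x ^ (δ + 1) - v x ^ (δ + 1)) * g x ∂μ| ≤
      ∫ x, ((δ : ℝ) + 1) * (|u x - v x| * (|u x| ^ δ * |g x|) +
        |u x - v x| * (|v x| ^ δ * |g x|)) ∂μ := by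
    calc |∫ x, (u x ^ (δ + 1) - v x ^ (δ + 1)) * g x ∂μ|
        ≤ ∫ x, ‖(u x ^ (δ + 1) - v x ^ (δ + 1)) * g x‖ ∂μ := by
          rw [← Real.norm_eq_abs]
          exact norm_integral_le_integral_norm _
      _ ≤ _ := by
          apply integral_mono_of_nonneg
            (Filter.Eventually.of_forall fun x => norm_nonneg _)
            (((hprod_u.add hprod_v).const_mul _))
          refine Filter.Eventually.of_forall fun x => ?_
          have hb := pow_sub_bound (u x) (v x) δ
          calc ‖(u x ^ (δ + 1) - v x ^ (δ + 1)) * g x‖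
              = |u x ^ (δ + 1) - v x ^ (δ + 1)| * |g x| := by
                rw [Real.norm_eq_abs, abs_mul]
            _ ≤ (((δ : ℝ) + 1) * ((|u x| ^ δ + |v x| ^ δ) * |u x - v x|)) * |g x| :=
                mul_le_mul_of_nonneg_right hb (abs_nonneg _)
            _ = ((δ : ℝ) + 1) * (|u x - v x| * (|u x| ^ δ * |g x|) +
                |u x - v x| * (|v x| ^ δ * |g x|)) := by ring
  -- split the integral
  have step2 : ∫ x, ((δ : ℝ) + 1) * (|u x - v x| * (|u x| ^ δ * |g x|) +
        |u x - v x| * (|v x| ^ δ * |g x|)) ∂μ =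
      ((δ : ℝ) + 1) * ((∫ x, |u x - v x| * (|u x| ^ δ * |g x|) ∂μ) +
        ∫ x, |u x - v x| * (|v x| ^ δ * |g x|) ∂μ) := by
    rw [integral_const_mul, integral_add hprod_u hprod_v]
  -- Hölder bounds
  have hku := keyCS μ δ hδ (fun x => u x - v x) u g (hu.sub hv) hu hg hfv2 hup hgp
  have hkv := keyCS μ δ hδ (fun x => u x - v x) v g (hu.sub hv) hv hg hfv2 hvp hgp
  -- identify lpNormR values
  have hAeq : lpNormR μ 2 (fun x => u x - v x) = (∫ x, |u x - v x| ^ 2 ∂μ) ^ ((1 : ℝ) / 2) := by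
    rw [lpNormR]; norm_num
  have hBeq : ∀ w : X → ℝ, lpNormR μ (2 * (δ + 1)) w
      = (∫ x, |w x| ^ (2 * (δ + 1)) ∂μ) ^ ((1 : ℝ) / (2 * ((δ : ℝ) + 1))) := by
    intro w; rw [lpNormR]; congr 1; push_cast; ring
  set A := lpNormR μ 2 (fun x => u x - v x) with hA
  set Bu := lpNormR μ (2 * (δ + 1)) u with hBu
  set Bv := lpNormR μ (2 * (δ + 1)) v with hBv
  set C := lpNormR μ (2 * (δ + 1)) g with hC
  have hAe : (∫ x, |u x - v x| ^ 2 ∂μ) ^ ((1 : ℝ) / 2) = A := hAeq.symm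
  have hA0 : 0 ≤ A := by
    rw [hA, lpNormR]; exact Real.rpow_nonneg (integral_nonneg fun x => by positivity) _
  have hBu0 : 0 ≤ Bu := by
    rw [hBu, lpNormR]; exact Real.rpow_nonneg (integral_nonneg fun x => by positivity) _
  have hBv0 : 0 ≤ Bv := by
    rw [hBv, lpNormR]; exact Real.rpow_nonneg (integral_nonneg fun x => by positivity) _
  have hC0 : 0 ≤ C := by
    rw [hC, lpNormR]; exact Real.rpow_nonneg (integral_nonneg fun x => by positivity) _
  rw [hAeq.symm, (hBeq u).symm, (hBeq g).symm] at hku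
  rw [hAeq.symm, (hBeq v).symm, (hBeq g).symm] at hkv
  have main : |∫ x, (u x ^ (δ + 1) - v x ^ (δ + 1)) * g x ∂μ| ≤
      ((δ : ℝ) + 1) * (A * (Bu ^ δ * C) + A * (Bv ^ δ * C)) := by
    refine step1.trans ?_
    rw [step2]
    have := add_le_add hku hkv
    nlinarith [this]
  refine main.trans ?_
  have h21 : (1 : ℝ) ≤ 2 ^ (δ - 1) := by
    calc (1 : ℝ) = 1 ^ (δ - 1) := (one_pow _).symm
      _ ≤ 2 ^ (δ - 1) := pow_le_pow_left₀ (by norm_num) (by norm_num) _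
  calc ((δ : ℝ) + 1) * (A * (Bu ^ δ * C) + A * (Bv ^ δ * C))
      = ((δ : ℝ) + 1) * 1 * (A * ((Bu ^ δ + Bv ^ δ) * C)) := by ring
    _ ≤ ((δ : ℝ) + 1) * 2 ^ (δ - 1) * (A * ((Bu ^ δ + Bv ^ δ) * C)) := by
        apply mul_le_mul_of_nonneg_right
          (mul_le_mul_of_nonneg_left h21 (by positivity))
        have : 0 ≤ Bu ^ δ + Bv ^ δ := by positivity
        positivity
    _ = ((δ : ℝ) + 1) * 2 ^ (δ - 1) * A * (Bu ^ δ + Bv ^ δ) * C := by ring
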